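/- Let H be a complex Hilbert space, let J : H → H be a bounded skew-adjoint operator (J* = −J), let L₀ : H → H be a bounded self-adjoint operator, and let L₁ : H → H be a bounded operator. Let α > 0 and C > 0, and let v ∈ H with v ≠ 0 and σ ∈ ℂ satisfy J((L₀ + L₁) v) = σ v. If ⟨L₀ v, v⟩ ≥ α ‖v‖² and |Re ⟨J(L₁ v), L₀ v⟩| ≤ C ‖v‖², then Re σ ≤ C/α. -/

import Mathlib

/-- Boundedness of unstable eigenvalues: if `J ((L₀ + L₁) v) = σ v` with `J`
skew-adjoint, `L₀` self-adjoint, `⟨L₀ v, v⟩ ≥ α ‖v‖²` and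
`|Re ⟨J L₁ v, L₀ v⟩| ≤ C ‖v‖²`, then `Re σ ≤ C / α`. -/
theorem re_eigenvalue_bounded
    {H : Type*} [NormedAddCommGroup H] [InnerProductSpace ℂ H] [CompleteSpace H]
    (J L₀ L₁ : H →L[ℂ] H)
    (hJ : ContinuousLinearMap.adjoint J = -J)
    (hL₀ : IsSelfAdjoint L₀)
    (α C : ℝ) (hα : 0 < α) (hC : 0 < C)
    (v : H) (hv : v ≠ 0) (σ : ℂ)
    (heig : J ((L₀ + L₁) v) = σ • v)
    (hcoer : α * ‖v‖ ^ 2 ≤ (inner ℂ (L₀ v) v : ℂ).re)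
    (hbound : |(inner ℂ (J (L₁ v)) (L₀ v) : ℂ).re| ≤ C * ‖v‖ ^ 2) :
    σ.re ≤ C / α := by
  set a : ℂ := inner ℂ (L₀ v) v with ha
  -- a is real
  have ha_conj : (starRingEnd ℂ) a = a := by
    rw [ha, inner_conj_symm]
    nth_rewrite 1 [← hL₀.adjoint_eq]
    rw [ContinuousLinearMap.adjoint_inner_right]
  have ha_im : a.im = 0 := by
    have := congrArg Complex.im ha_conj
    simp [Complex.conj_im] at this
    linarith
  -- skew part has zero real part
  have hskew : (inner ℂ (L₀ v) (J (L₀ v)) : ℂ).re = 0 := by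
    have h1 : (inner ℂ (L₀ v) (J (L₀ v)) : ℂ)
        = -(inner ℂ (J (L₀ v)) (L₀ v) : ℂ) := by
      rw [← ContinuousLinearMap.adjoint_inner_left, hJ]
      simp [inner_neg_left]
    have h2 : (inner ℂ (J (L₀ v)) (L₀ v) : ℂ)
        = (starRingEnd ℂ) (inner ℂ (L₀ v) (J (L₀ v)) : ℂ) := by
      rw [inner_conj_symm]
    rw [h2] at h1
    have := congrArg Complex.re h1
    rw [Complex.neg_re, Complex.conj_re] at this
    linarith
  -- main identity
  have hkey : σ.re * a.re = (inner ℂ (J (L₁ v)) (L₀ v) : ℂ).re := by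
    have h3 : (inner ℂ (L₀ v) (σ • v) : ℂ) = σ * a := by
      rw [inner_smul_right, ha]
    have h4 : (inner ℂ (L₀ v) (J ((L₀ + L₁) v)) : ℂ)
        = inner ℂ (L₀ v) (J (L₀ v)) + inner ℂ (L₀ v) (J (L₁ v)) := by
      rw [ContinuousLinearMap.add_apply, map_add, inner_add_right]
    have h5 : σ * a = inner ℂ (L₀ v) (J (L₀ v)) + inner ℂ (L₀ v) (J (L₁ v)) := by
      rw [← h3, ← h4, heig]
    have h6 : (inner ℂ (J (L₁ v)) (L₀ v) : ℂ).re
        = (inner ℂ (L₀ v) (J (L₁ v)) : ℂ).re := by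
      rw [← inner_conj_symm (L₀ v), Complex.conj_re]
    have h7 := congrArg Complex.re h5
    simp [Complex.add_re, hskew, Complex.mul_re, ha_im] at h7
    rw [h6]
    linarith
  have hv' : (0:ℝ) < ‖v‖ := norm_pos_iff.mpr hv
  have hn : (0:ℝ) < ‖v‖ ^ 2 := by positivity
  have habs := abs_le.mp hbound
  rw [le_div_iff₀ hα]
  nlinarith [hcoer, habs.1, habs.2, hkey, mul_pos hα hn]
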